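/- arXiv:2501.07714 — 2 statements merged into one kernel-verified Lean document; each statement's English description precedes it below -/
import Mathlib

section
/- Let ε > 0, let Q : ℝ → ℝ be the mid-rise uniform quantizer Q(v) = ε·⌊v/ε⌋ + ε/2, let x be a real-valued random variable, and let w be a random variable uniformly distributed on [−ε/2, ε/2] and independent of x. Then the dither-quantization error e := Q(x + w) − x − w is uniformly distributed on [−ε/2, ε/2] and is independent of x. -/
open MeasureTheory ProbabilityTheory

/-- The uniform probability measure on the interval `[-ε/2, ε/2]`. -/
noncomputable def unifDither (ε : ℝ) : Measure ℝ :=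
  (ENNReal.ofReal ε)⁻¹ • volume.restrict (Set.Icc (-(ε/2)) (ε/2))

/-- The mid-rise uniform quantizer of resolution `ε`: `Q(v) = ε⌊v/ε⌋ + ε/2`. -/
noncomputable def midRiseQuantizer (ε : ℝ) (v : ℝ) : ℝ :=
  ε * (⌊v / ε⌋ : ℝ) + ε / 2

namespace DitherAux

/-- The quantization error of `v` itself. -/
noncomputable def g (ε : ℝ) (v : ℝ) : ℝ := midRiseQuantizer ε v - v

lemma measurable_g (ε : ℝ) : Measurable (g ε) := by
  have h1 : Measurable fun v : ℝ => ((⌊v / ε⌋ : ℤ) : ℝ) :=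
    (measurable_from_top (f := (Int.cast : ℤ → ℝ))).comp (measurable_id.div_const ε).floor
  exact ((measurable_const.mul h1).add measurable_const).sub measurable_id

lemma g_periodic {ε : ℝ} (hε : 0 < ε) : Function.Periodic (g ε) ε := by
  intro v
  unfold g midRiseQuantizer
  rw [add_div, div_self hε.ne', Int.floor_add_one]
  push_cast
  ring

lemma unifDither_eq_Ioc (ε : ℝ) :
    unifDither ε = (ENNReal.ofReal ε)⁻¹ • volume.restrict (Set.Ioc (-(ε/2)) (ε/2)) := by
  rw [unifDither, Measure.restrict_congr_set MeasureTheory.Ioc_ae_eq_Icc]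

lemma unifDither_prob {ε : ℝ} (hε : 0 < ε) : IsProbabilityMeasure (unifDither ε) := by
  constructor
  rw [unifDither, Measure.smul_apply, smul_eq_mul,
    Measure.restrict_apply MeasurableSet.univ, Set.univ_inter, Real.volume_Icc]
  rw [show ε / 2 - -(ε/2) = ε by ring]
  exact ENNReal.inv_mul_cancel (by simpa using hε) ENNReal.ofReal_ne_top

lemma map_g_Ioc {ε : ℝ} [Fact (0 < ε)] (ψ : AddCircle ε → ℝ)
    (hψg : ∀ v : ℝ, ψ v = g ε v) (hψ : Measurable ψ) (a : ℝ) :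
    Measure.map (g ε) (volume.restrict (Set.Ioc a (a + ε))) =
      Measure.map ψ (volume : Measure (AddCircle ε)) := by
  have h1 := (AddCircle.measurePreserving_mk ε a).map_eq
  have h2 : g ε = ψ ∘ ((↑) : ℝ → AddCircle ε) := by
    funext v; exact (hψg v).symm
  rw [h2, ← Measure.map_map hψ AddCircle.measurable_mk', h1]

lemma map_translate {ε : ℝ} (hε : 0 < ε) (t : ℝ) :
    Measure.map (fun s => t + s) (volume.restrict (Set.Ioc (-(ε/2)) (ε/2))) =
      volume.restrict (Set.Ioc (t - ε/2) (t - ε/2 + ε)) := by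
  have hpre : (fun s => t + s) ⁻¹' Set.Ioc (t - ε/2) (t - ε/2 + ε)
      = Set.Ioc (-(ε/2)) (ε/2) := by
    ext s
    simp only [Set.mem_preimage, Set.mem_Ioc]
    constructor <;> intro h <;> exact ⟨by linarith [h.1], by linarith [h.2]⟩
  have := Measure.restrict_map (measurable_const_add t)
    (measurableSet_Ioc (a := t - ε/2) (b := t - ε/2 + ε)) (μ := (volume : Measure ℝ))
  rw [(measurePreserving_add_left volume t).map_eq, hpre] at this
  exact this.symm

lemma map_g_base {ε : ℝ} (hε : 0 < ε) :
    Measure.map (g ε) (volume.restrict (Set.Ioc 0 (0 + ε))) =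
      volume.restrict (Set.Ioc (-(ε/2)) (ε/2)) := by
  rw [zero_add, Measure.restrict_congr_set MeasureTheory.Ico_ae_eq_Ioc.symm]
  have heq : g ε =ᵐ[volume.restrict (Set.Ico 0 ε)] (fun v => ε / 2 - v) := by
    refine (ae_restrict_iff' measurableSet_Ico).2 (Filter.Eventually.of_forall ?_)
    intro v hv
    unfold g midRiseQuantizer
    have h0 : ⌊v / ε⌋ = 0 := by
      rw [Int.floor_eq_zero_iff]
      exact ⟨div_nonneg hv.1 hε.le, (div_lt_one hε).2 hv.2⟩
    rw [h0]
    push_cast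
    ring
  rw [Measure.map_congr heq]
  have hpre : (fun v => ε / 2 - v) ⁻¹' Set.Ioc (-(ε/2)) (ε/2) = Set.Ico 0 ε := by
    ext v
    simp only [Set.mem_preimage, Set.mem_Ioc, Set.mem_Ico]
    constructor <;> intro h <;> exact ⟨by linarith [h.1], by linarith [h.2]⟩
  have := Measure.restrict_map ((Measure.measurePreserving_sub_left volume (ε/2)).measurable)
    (measurableSet_Ioc (a := -(ε/2)) (b := ε/2)) (μ := (volume : Measure ℝ))
  rw [(Measure.measurePreserving_sub_left volume (ε/2)).map_eq, hpre] at this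
  exact this.symm

/-- Key lemma: for every fixed `t`, the error map `s ↦ Q(t+s) - (t+s)` pushes the dither
distribution to itself. -/
lemma map_err {ε : ℝ} (hε : 0 < ε) (t : ℝ) :
    Measure.map (fun s => g ε (t + s)) (unifDither ε) = unifDither ε := by
  haveI : Fact (0 < ε) := ⟨hε⟩
  set ψ : AddCircle ε → ℝ := (g_periodic hε).lift with hψdef
  have hψg : ∀ v : ℝ, ψ v = g ε v := fun v => (g_periodic hε).lift_coe v
  have hψ : Measurable ψ := by
    rw [QuotientAddGroup.measurable_from_quotient]
    have : ψ ∘ ((↑) : ℝ → AddCircle ε) = g ε := funext hψg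
    rw [this]
    exact measurable_g ε
  have hcomp : (fun s => g ε (t + s)) = (g ε) ∘ (fun s => t + s) := rfl
  rw [unifDither_eq_Ioc, Measure.map_smul, hcomp,
    ← Measure.map_map (measurable_g ε) (measurable_const_add t),
    map_translate hε t, map_g_Ioc ψ hψg hψ (t - ε/2),
    ← map_g_Ioc ψ hψg hψ 0, map_g_base hε]

end DitherAux

open DitherAux in
/-- the dither-quantization error `e = Q(x + w) − x − w` is uniformly
distributed on `[−ε/2, ε/2]` and independent of `x`. -/
theorem dither_error_uniform_and_indep
    {Ω : Type*} [MeasureSpace Ω] [IsProbabilityMeasure (ℙ : Measure Ω)]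
    (ε : ℝ) (hε : 0 < ε)
    (x w : Ω → ℝ) (hx : Measurable x) (hw : Measurable w)
    (hw_unif : Measure.map w ℙ = unifDither ε)
    (hxw : IndepFun x w ℙ) :
    Measure.map (fun ω => midRiseQuantizer ε (x ω + w ω) - x ω - w ω) ℙ = unifDither ε ∧
    IndepFun (fun ω => midRiseQuantizer ε (x ω + w ω) - x ω - w ω) x ℙ := by
  classical
  haveI : IsProbabilityMeasure (unifDither ε) := unifDither_prob hε
  set μ : Measure ℝ := Measure.map x ℙ with hμdef
  haveI : IsProbabilityMeasure μ := Measure.isProbabilityMeasure_map hx.aemeasurable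
  set ν : Measure ℝ := unifDither ε with hνdef
  have he_eq : (fun ω => midRiseQuantizer ε (x ω + w ω) - x ω - w ω)
      = fun ω => g ε (x ω + w ω) := by
    funext ω; unfold DitherAux.g; ring
  set e : Ω → ℝ := fun ω => g ε (x ω + w ω) with hedef
  have he : Measurable e := (measurable_g ε).comp (hx.add hw)
  -- joint law of (x, w)
  have hxwmap : Measure.map (fun ω => (x ω, w ω)) ℙ = μ.prod ν := by
    rw [← hw_unif]
    exact (indepFun_iff_map_prod_eq_prod_map_map hx.aemeasurable hw.aemeasurable).1 hxw
  -- the transfer map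
  set F : ℝ × ℝ → ℝ × ℝ := fun p => (p.1, g ε (p.1 + p.2)) with hFdef
  have hF : Measurable F :=
    measurable_fst.prodMk ((measurable_g ε).comp (measurable_fst.add measurable_snd))
  have hFmap : Measure.map F (μ.prod ν) = μ.prod ν := by
    have hrect : ∀ s t : Set ℝ, MeasurableSet s → MeasurableSet t →
        Measure.map F (μ.prod ν) (s ×ˢ t) = μ s * ν t := by
      intro s t hs ht
      rw [Measure.map_apply hF (hs.prod ht), Measure.prod_apply (hF (hs.prod ht))]
      have hsec : ∀ a : ℝ, Prod.mk a ⁻¹' (F ⁻¹' s ×ˢ t)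
          = if a ∈ s then (fun b => g ε (a + b)) ⁻¹' t else ∅ := by
        intro a
        by_cases h : a ∈ s <;> · ext b; simp [hFdef, h]
      have hint : (fun a => ν (Prod.mk a ⁻¹' (F ⁻¹' s ×ˢ t)))
          = s.indicator (fun _ => ν t) := by
        funext a
        rw [hsec a]
        by_cases h : a ∈ s
        · have hf : Measurable fun b : ℝ => g ε (a + b) :=
            (measurable_g ε).comp (measurable_const_add a)
          rw [if_pos h, Set.indicator_of_mem h]
          conv_rhs => rw [hνdef, ← map_err hε a]
          rw [Measure.map_apply hf ht, hνdef]
        · rw [if_neg h, Set.indicator_of_notMem h]; simp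
      rw [hint, lintegral_indicator_const hs, mul_comm]
    exact (Measure.prod_eq hrect).symm
  have hjoint : Measure.map (fun ω => (x ω, e ω)) ℙ = μ.prod ν := by
    have : (fun ω => (x ω, e ω)) = F ∘ (fun ω => (x ω, w ω)) := rfl
    rw [this, ← Measure.map_map hF (hx.prodMk hw), hxwmap, hFmap]
  have hemap : Measure.map e ℙ = ν := by
    have : e = Prod.snd ∘ (fun ω => (x ω, e ω)) := rfl
    rw [this, ← Measure.map_map measurable_snd (hx.prodMk he), hjoint,
      Measure.map_snd_prod, measure_univ, one_smul]
  constructor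
  · rw [he_eq]; exact hemap
  · rw [he_eq]
    refine IndepFun.symm ?_
    rw [indepFun_iff_map_prod_eq_prod_map_map hx.aemeasurable he.aemeasurable]
    rw [hjoint, hemap, ← hμdef]
end

section
/- Large data regime with quantized observables. Let ε > 0, let {v_t : t ∈ ℕ} ⊂ ℝ^N and {u_t : t ∈ ℕ} ⊂ ℝ^m be deterministic bounded sequences, and let {e_t : t ∈ ℕ} ⊂ ℝ^N and {d_t : t ∈ ℕ} ⊂ ℝ^m be random vector sequences whose scalar components, taken all together, form one dither-error family. Then for every A ∈ ℝ^{N×N} and B ∈ ℝ^{N×m}, almost surely (1/T)·Σ_{t=0}^{T−1} [ ‖(v_{t+1} + e_{t+1}) − A(v_t + e_t) − B(u_t + d_t)‖² − ‖v_{t+1} − A v_t − B u_t‖² ] → N·ε²/12 + (ε²/12)·(‖A‖² + ‖B‖²) as T → ∞. -/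
open MeasureTheory ProbabilityTheory

/-- A dither-error family: mutually independent random variables, each uniformly
distributed on `[-ε/2, ε/2]`. -/
def IsDitherFamily {Ω : Type*} [MeasureSpace Ω] {ι : Type*} (ε : ℝ) (e : ι → Ω → ℝ) : Prop :=
  (∀ i, Measurable (e i)) ∧
  iIndepFun e ℙ ∧
  ∀ i, Measure.map (e i) ℙ = unifDither ε

/-- Squared Euclidean norm of a vector in `ℝ^N`. -/
def vecNormSq {n : Type*} [Fintype n] (w : n → ℝ) : ℝ := ∑ i, (w i) ^ 2

/-- Squared Frobenius norm of a real matrix. -/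
def frobNormSq {m n : Type*} [Fintype m] [Fintype n] (A : Matrix m n ℝ) : ℝ :=
  ∑ i, ∑ j, (A i j) ^ 2

lemma unifDither_integral_id {ε : ℝ} (hε : 0 < ε) : ∫ x, x ∂(unifDither ε) = 0 := by
  rw [unifDither, integral_smul_measure, integral_Icc_eq_integral_Ioc,
    ← intervalIntegral.integral_of_le (by linarith : -(ε/2) ≤ ε/2), integral_id]
  ring_nf

lemma unifDither_integral_sq {ε : ℝ} (hε : 0 < ε) : ∫ x, x^2 ∂(unifDither ε) = ε^2/12 := by
  rw [unifDither, integral_smul_measure, integral_Icc_eq_integral_Ioc,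
    ← intervalIntegral.integral_of_le (by linarith : -(ε/2) ≤ ε/2), integral_pow]
  have h1 : ((ENNReal.ofReal ε)⁻¹).toReal = ε⁻¹ := by
    rw [ENNReal.toReal_inv, ENNReal.toReal_ofReal hε.le]
  rw [h1, smul_eq_mul]
  push_cast
  field_simp
  ring

section Dither
variable {Ω : Type*} [MeasureSpace Ω] [IsProbabilityMeasure (ℙ : Measure Ω)]
  {ι : Type*} {ε : ℝ} {Z : ι → Ω → ℝ}

lemma integrable_of_ae_bound {f : Ω → ℝ} (hf : AEStronglyMeasurable f ℙ) {C : ℝ}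
    (h : ∀ᵐ ω ∂ℙ, |f ω| ≤ C) : Integrable f ℙ :=
  (memLp_top_of_bound hf C (by simpa [Real.norm_eq_abs] using h)).integrable le_top

lemma IsDitherFamily.ae_bound (hε : 0 < ε) (hZ : IsDitherFamily ε Z) (i : ι) :
    ∀ᵐ ω ∂ℙ, |Z i ω| ≤ ε/2 := by
  obtain ⟨hm, -, hmap⟩ := hZ
  have h0 : Measure.map (Z i) ℙ (Set.Icc (-(ε/2)) (ε/2))ᶜ = 0 := by
    rw [hmap i]
    simp [unifDither, Measure.restrict_apply measurableSet_Icc.compl]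
  rw [Measure.map_apply (hm i) measurableSet_Icc.compl] at h0
  rw [ae_iff]
  convert h0 using 2
  ext ω
  simp [abs_le, Set.mem_Icc]

lemma IsDitherFamily.integral_eq (hε : 0 < ε) (hZ : IsDitherFamily ε Z) (i : ι) :
    ∫ ω, Z i ω ∂ℙ = 0 := by
  have : ∫ ω, Z i ω ∂ℙ = ∫ x, x ∂(Measure.map (Z i) ℙ) :=
    (integral_map (hZ.1 i).aemeasurable aestronglyMeasurable_id).symm
  rw [this, hZ.2.2 i, unifDither_integral_id hε]

lemma IsDitherFamily.integral_sq (hε : 0 < ε) (hZ : IsDitherFamily ε Z) (i : ι) :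
    ∫ ω, (Z i ω)^2 ∂ℙ = ε^2/12 := by
  have : ∫ ω, (Z i ω)^2 ∂ℙ = ∫ x, x^2 ∂(Measure.map (Z i) ℙ) :=
    (integral_map (hZ.1 i).aemeasurable
      (measurable_id.pow_const 2).aestronglyMeasurable).symm
  rw [this, hZ.2.2 i, unifDither_integral_sq hε]

lemma IsDitherFamily.integrable (hε : 0 < ε) (hZ : IsDitherFamily ε Z) (i : ι) :
    Integrable (Z i) ℙ :=
  integrable_of_ae_bound (hZ.1 i).aestronglyMeasurable (hZ.ae_bound hε i)

lemma IsDitherFamily.integrable_mul (hε : 0 < ε) (hZ : IsDitherFamily ε Z) (i j : ι) :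
    Integrable (fun ω => Z i ω * Z j ω) ℙ := by
  refine integrable_of_ae_bound ((hZ.1 i).mul (hZ.1 j)).aestronglyMeasurable
    (C := (ε/2)*(ε/2)) ?_
  filter_upwards [hZ.ae_bound hε i, hZ.ae_bound hε j] with ω h1 h2
  rw [abs_mul]
  exact mul_le_mul h1 h2 (abs_nonneg _) (by linarith)

lemma IsDitherFamily.integral_mul (hε : 0 < ε) (hZ : IsDitherFamily ε Z) {i j : ι}
    (hij : i ≠ j) : ∫ ω, Z i ω * Z j ω ∂ℙ = 0 := by
  have h := (hZ.2.1.indepFun hij).integral_mul_eq_mul_integral (hZ.integrable hε i).aestronglyMeasurable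
    (hZ.integrable hε j).aestronglyMeasurable
  have h2 : ∫ ω, Z i ω * Z j ω ∂ℙ = ∫ ω, (Z i * Z j) ω ∂ℙ := rfl
  rw [h2]
  simp only [h]
  rw [hZ.integral_eq hε i, zero_mul]

lemma IsDitherFamily.integral_linear (hε : 0 < ε) (hZ : IsDitherFamily ε Z)
    {α : Type*} [Fintype α] (ρ : α → ι) (co : α → ℝ) :
    ∫ ω, (∑ a, co a * Z (ρ a) ω) ∂ℙ = 0 := by
  rw [integral_finset_sum _ (fun a _ => (hZ.integrable hε (ρ a)).const_mul _)]
  simp [integral_const_mul, hZ.integral_eq hε]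

lemma IsDitherFamily.linear_ae_bound (hε : 0 < ε) (hZ : IsDitherFamily ε Z)
    {α : Type*} [Fintype α] (ρ : α → ι) (co : α → ℝ) :
    ∀ᵐ ω ∂ℙ, |∑ a, co a * Z (ρ a) ω| ≤ (∑ a, |co a|) * (ε/2) := by
  filter_upwards [ae_all_iff.2 fun a => hZ.ae_bound hε (ρ a)] with ω hω
  calc |∑ a, co a * Z (ρ a) ω| ≤ ∑ a, |co a * Z (ρ a) ω| :=
        Finset.abs_sum_le_sum_abs _ _
    _ ≤ ∑ a, |co a| * (ε/2) := by
        refine Finset.sum_le_sum fun a _ => ?_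
        rw [abs_mul]
        exact mul_le_mul_of_nonneg_left (hω a) (abs_nonneg _)
    _ = (∑ a, |co a|) * (ε/2) := (Finset.sum_mul _ _ _).symm

lemma IsDitherFamily.integral_linear_sq (hε : 0 < ε) (hZ : IsDitherFamily ε Z)
    {α : Type*} [Fintype α] {ρ : α → ι} (hρ : Function.Injective ρ) (co : α → ℝ) :
    ∫ ω, (∑ a, co a * Z (ρ a) ω)^2 ∂ℙ = (∑ a, (co a)^2) * (ε^2/12) := by
  classical
  have hexp : ∀ ω, (∑ a, co a * Z (ρ a) ω)^2
      = ∑ a, ∑ b, (co a * co b) * (Z (ρ a) ω * Z (ρ b) ω) := by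
    intro ω
    rw [sq, Finset.sum_mul_sum]
    exact Finset.sum_congr rfl fun a _ => Finset.sum_congr rfl fun b _ => by ring
  simp_rw [hexp]
  rw [integral_finset_sum _ (fun a _ => integrable_finset_sum _
    (fun b _ => ((hZ.integrable_mul hε (ρ a) (ρ b)).const_mul _)))]
  have : ∀ a : α, ∫ ω, (∑ b, (co a * co b) * (Z (ρ a) ω * Z (ρ b) ω)) ∂ℙ
      = (co a)^2 * (ε^2/12) := by
    intro a
    rw [integral_finset_sum _ (fun b _ => ((hZ.integrable_mul hε (ρ a) (ρ b)).const_mul _))]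
    have : ∀ b : α, ∫ ω, (co a * co b) * (Z (ρ a) ω * Z (ρ b) ω) ∂ℙ
        = if b = a then (co a)^2 * (ε^2/12) else 0 := by
      intro b
      rw [integral_const_mul]
      by_cases hab : b = a
      · subst hab
        simp_rw [← sq]
        rw [hZ.integral_sq hε]
        norm_num
      · rw [hZ.integral_mul hε (fun h => hab (hρ h).symm), mul_zero, if_neg hab]
    simp_rw [this]
    simp
  simp_rw [this]
  rw [← Finset.sum_mul]

open Filter in
lemma slln_two_dependent {Ω : Type*} [MeasureSpace Ω] [IsProbabilityMeasure (ℙ : Measure Ω)]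
    (g : ℕ → Ω → ℝ) (M : ℝ) (hM : 0 ≤ M)
    (hmeas : ∀ t, AEStronglyMeasurable (g t) ℙ)
    (hbound : ∀ t, ∀ᵐ ω ∂ℙ, |g t ω| ≤ M)
    (huncorr : ∀ s t, s < t → t ≠ s + 1 → ∫ ω, g s ω * g t ω ∂ℙ = 0) :
    ∀ᵐ ω ∂ℙ, Tendsto (fun T : ℕ => (1/(T:ℝ)) * ∑ t ∈ Finset.range T, g t ω)
      atTop (nhds 0) := by
  classical
  set S : ℕ → Ω → ℝ := fun T ω => ∑ t ∈ Finset.range T, g t ω with hSdef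
  have gmul_int : ∀ s t, Integrable (fun ω => g s ω * g t ω) ℙ := fun s t =>
    integrable_of_ae_bound ((hmeas s).mul (hmeas t)) (C := M^2) <| by
      filter_upwards [hbound s, hbound t] with ω h1 h2
      rw [abs_mul, sq]
      exact mul_le_mul h1 h2 (abs_nonneg _) hM
  have hc_le : ∀ s t, ∫ ω, g s ω * g t ω ∂ℙ ≤ M^2 := by
    intro s t
    have hae : ∀ᵐ ω ∂ℙ, g s ω * g t ω ≤ M^2 := by
      filter_upwards [hbound s, hbound t] with ω h1 h2
      calc g s ω * g t ω ≤ |g s ω * g t ω| := le_abs_self _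
        _ = |g s ω| * |g t ω| := abs_mul _ _
        _ ≤ M * M := mul_le_mul h1 h2 (abs_nonneg _) hM
        _ = M^2 := (sq M).symm
    simpa using integral_mono_ae (gmul_int s t) (integrable_const (M^2)) hae
  have hexp : ∀ (T : ℕ) (ω : Ω), (S T ω)^2
      = ∑ s ∈ Finset.range T, ∑ t ∈ Finset.range T, g s ω * g t ω := by
    intro T ω
    show (∑ t ∈ Finset.range T, g t ω)^2 = _
    rw [sq, Finset.sum_mul_sum]
  have hS2int : ∀ T, Integrable (fun ω => (S T ω)^2) ℙ := by
    intro T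
    have : (fun ω => (S T ω)^2)
        = fun ω => ∑ s ∈ Finset.range T, ∑ t ∈ Finset.range T, g s ω * g t ω :=
      funext fun ω => hexp T ω
    rw [this]
    exact integrable_finset_sum _ fun s _ => integrable_finset_sum _ fun t _ => gmul_int s t
  have hSsq : ∀ T : ℕ, ∫ ω, (S T ω)^2 ∂ℙ ≤ 3 * T * M^2 := by
    intro T
    calc ∫ ω, (S T ω)^2 ∂ℙ
        = ∑ s ∈ Finset.range T, ∑ t ∈ Finset.range T, ∫ ω, g s ω * g t ω ∂ℙ := by
          simp_rw [hexp]
          rw [integral_finset_sum _ fun s _ => integrable_finset_sum _ fun t _ => gmul_int s t]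
          exact Finset.sum_congr rfl fun s _ => integral_finset_sum _ fun t _ => gmul_int s t
      _ ≤ ∑ s ∈ Finset.range T, 3 * M^2 := by
          refine Finset.sum_le_sum fun s _ => ?_
          have hvanish : ∑ t ∈ Finset.range T, ∫ ω, g s ω * g t ω ∂ℙ
              = ∑ t ∈ Finset.range T ∩ {s-1, s, s+1}, ∫ ω, g s ω * g t ω ∂ℙ := by
            refine (Finset.sum_subset Finset.inter_subset_left ?_).symm
            intro t ht hnt
            simp only [Finset.mem_inter, ht, true_and, Finset.mem_insert,
              Finset.mem_singleton, not_or] at hnt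
            rcases lt_trichotomy s t with h|h|h
            · exact huncorr s t h hnt.2.2
            · exact absurd h.symm hnt.2.1
            · have h0 : ∫ ω, g t ω * g s ω ∂ℙ = 0 := huncorr t s h (by omega)
              rw [← h0]
              simp_rw [mul_comm]
          rw [hvanish]
          have hcard : (Finset.range T ∩ {s-1, s, s+1}).card ≤ 3 := by
            refine le_trans (Finset.card_le_card Finset.inter_subset_right) ?_
            refine le_trans (Finset.card_insert_le _ _) ?_
            exact Nat.succ_le_succ (le_trans (Finset.card_insert_le _ _) (by simp))
          calc ∑ t ∈ Finset.range T ∩ {s-1,s,s+1}, ∫ ω, g s ω * g t ω ∂ℙ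
              ≤ (Finset.range T ∩ {s-1,s,s+1}).card • M^2 :=
                Finset.sum_le_card_nsmul _ _ _ fun t _ => hc_le s t
            _ ≤ 3 * M^2 := by
                rw [nsmul_eq_mul]
                exact mul_le_mul_of_nonneg_right (by exact_mod_cast hcard) (sq_nonneg M)
      _ = 3 * T * M^2 := by
          rw [Finset.sum_const, Finset.card_range, nsmul_eq_mul]; ring
  -- subsequence: squares along (n+1)^2
  set F : ℕ → Ω → ℝ := fun n ω => (S ((n+1)^2) ω / (((n+1 : ℕ)) : ℝ)^2)^2 with hF
  have hF_nonneg : ∀ n ω, 0 ≤ F n ω := fun n ω => sq_nonneg _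
  have hFint : ∀ n, Integrable (F n) ℙ := by
    intro n
    have h : F n = fun ω => (S ((n+1)^2) ω)^2 / ((((n+1:ℕ)):ℝ)^2)^2 := by
      funext ω
      rw [hF]
      exact div_pow _ _ _
    rw [h]
    exact (hS2int _).div_const _
  have hFbound : ∀ n, ∫ ω, F n ω ∂ℙ ≤ 3 * M^2 / (((n+1 : ℕ)) : ℝ)^2 := by
    intro n
    have h1 : ∫ ω, F n ω ∂ℙ = (∫ ω, (S ((n+1)^2) ω)^2 ∂ℙ) / ((((n+1:ℕ)):ℝ)^2)^2 := by
      simp_rw [hF, div_pow]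
      exact integral_div _ _
    have h2 := hSsq ((n+1)^2)
    have h2' : ∫ ω, (S ((n+1)^2) ω)^2 ∂ℙ ≤ 3 * (((n+1:ℕ)):ℝ)^2 * M^2 := by
      refine le_trans h2 (le_of_eq ?_)
      push_cast
      ring
    have hcpos : (0:ℝ) < (((n+1:ℕ)):ℝ)^2 := by positivity
    rw [h1]
    calc (∫ ω, (S ((n+1)^2) ω)^2 ∂ℙ) / ((((n+1:ℕ)):ℝ)^2)^2
        ≤ (3 * (((n+1:ℕ)):ℝ)^2 * M^2) / ((((n+1:ℕ)):ℝ)^2)^2 := by gcongr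
      _ = 3 * M^2 / (((n+1:ℕ)):ℝ)^2 := by field_simp
  have hbsum : Summable (fun n : ℕ => 3 * M^2 / (((n+1 : ℕ)) : ℝ)^2) := by
    have h1 : Summable (fun n : ℕ => 1 / (((n+1 : ℕ)) : ℝ)^2) := by
      have := (summable_nat_add_iff 1).2 (Real.summable_one_div_nat_pow.2 one_lt_two)
      exact this
    have := h1.mul_left (3 * M^2)
    refine this.congr fun n => ?_
    rw [mul_one_div]
  have hae : ∀ᵐ ω ∂ℙ, Summable fun n => F n ω := by
    have hL : ∫⁻ ω, ∑' n, ENNReal.ofReal (F n ω) ∂ℙ ≠ ⊤ := by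
      rw [lintegral_tsum (f := fun n ω => ENNReal.ofReal (F n ω)) fun n =>
        (ENNReal.measurable_ofReal.comp_aemeasurable (hFint n).aemeasurable)]
      have heq : ∀ n, ∫⁻ ω, ENNReal.ofReal (F n ω) ∂ℙ = ENNReal.ofReal (∫ ω, F n ω ∂ℙ) :=
        fun n => (ofReal_integral_eq_lintegral_ofReal (hFint n)
          (Eventually.of_forall fun ω => hF_nonneg n ω)).symm
      simp_rw [heq]
      refine ne_top_of_le_ne_top ?_ (ENNReal.tsum_le_tsum fun n =>
        ENNReal.ofReal_le_ofReal (hFbound n))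
      rw [← ENNReal.ofReal_tsum_of_nonneg (fun n => by positivity) hbsum]
      exact ENNReal.ofReal_ne_top
    have hmble : AEMeasurable (fun ω => ∑' n, ENNReal.ofReal (F n ω)) ℙ :=
      AEMeasurable.ennreal_tsum fun n =>
        ENNReal.measurable_ofReal.comp_aemeasurable (hFint n).aemeasurable
    filter_upwards [ae_lt_top' hmble hL] with ω hω
    have hsum' : ∑' n, ENNReal.ofReal (F n ω) ≠ ⊤ := hω.ne
    have h2 := ENNReal.summable_toReal hsum'
    have h3 : (fun n => (ENNReal.ofReal (F n ω)).toReal) = fun n => F n ω :=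
      funext fun n => ENNReal.toReal_ofReal (hF_nonneg n ω)
    rwa [h3] at h2
  filter_upwards [hae, ae_all_iff.2 hbound] with ω hSummable hb
  have hq2 : Tendsto (fun n => F n ω) atTop (nhds 0) := hSummable.tendsto_atTop_zero
  set q : ℕ → ℝ := fun k => S (k^2) ω / ((k : ℝ)^2) with hq
  have hqF : ∀ n, F n ω = (q (n+1))^2 := by
    intro n
    rw [hF, hq]
  have habs : Tendsto (fun n => |q (n+1)|) atTop (nhds 0) := by
    have hcont : Tendsto (fun n => Real.sqrt (F n ω)) atTop (nhds (Real.sqrt 0)) :=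
      (Real.continuous_sqrt.tendsto 0).comp hq2
    rw [Real.sqrt_zero] at hcont
    refine hcont.congr fun n => ?_
    rw [hqF n, Real.sqrt_sq_eq_abs]
  have hq1 : Tendsto (fun n => q (n+1)) atTop (nhds 0) :=
    (tendsto_zero_iff_abs_tendsto_zero _).2 habs
  have hqt : Tendsto q atTop (nhds 0) := (tendsto_add_atTop_iff_nat 1).1 hq1
  have hsqrt : Tendsto Nat.sqrt atTop atTop :=
    tendsto_atTop.2 fun b => eventually_atTop.2 ⟨b*b, fun T hT => Nat.le_sqrt.2 hT⟩
  have hcomp : Tendsto (fun T => q (Nat.sqrt T)) atTop (nhds 0) := hqt.comp hsqrt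
  have hdiv : Tendsto (fun T : ℕ => 2*M / ((Nat.sqrt T : ℕ) : ℝ)) atTop (nhds 0) :=
    (tendsto_const_div_atTop_nhds_zero_nat (2*M)).comp hsqrt
  have hgoal : Tendsto (fun T : ℕ => |q (Nat.sqrt T)| + 2*M/((Nat.sqrt T : ℕ) : ℝ))
      atTop (nhds 0) := by
    have := hcomp.abs.add hdiv
    simpa using this
  rw [tendsto_zero_iff_abs_tendsto_zero]
  refine squeeze_zero' (Eventually.of_forall fun T => abs_nonneg _) ?_ hgoal
  filter_upwards [eventually_ge_atTop 1] with T hT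
  set k := Nat.sqrt T with hk
  have hk1 : 1 ≤ k := Nat.le_sqrt.2 (by omega)
  have hk2 : k^2 ≤ T := Nat.sqrt_le' T
  have hk3 : T ≤ k^2 + 2*k := by
    have h := Nat.lt_succ_sqrt' T
    rw [Nat.succ_eq_add_one, ← hk] at h
    have h2 : (k+1)^2 = k^2 + 2*k + 1 := by ring
    omega
  have hkR : (1:ℝ) ≤ (k:ℝ) := by exact_mod_cast hk1
  have hTR : ((k:ℝ))^2 ≤ (T:ℝ) := by exact_mod_cast hk2
  have hTpos : (0:ℝ) < T := by
    have : (1:ℝ) ≤ T := by exact_mod_cast hT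
    linarith
  have hkpos : (0:ℝ) < (k:ℝ)^2 := by nlinarith
  have hsplit : S T ω = S (k^2) ω + ∑ t ∈ Finset.Ico (k^2) T, g t ω :=
    (Finset.sum_range_add_sum_Ico _ hk2).symm
  have htail : |∑ t ∈ Finset.Ico (k^2) T, g t ω| ≤ 2*(k:ℝ)*M := by
    calc |∑ t ∈ Finset.Ico (k^2) T, g t ω| ≤ ∑ t ∈ Finset.Ico (k^2) T, |g t ω| :=
        Finset.abs_sum_le_sum_abs _ _
      _ ≤ ∑ t ∈ Finset.Ico (k^2) T, M := Finset.sum_le_sum fun t _ => hb t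
      _ = ((T - k^2 : ℕ) : ℝ) * M := by rw [Finset.sum_const, Nat.card_Ico, nsmul_eq_mul]
      _ ≤ ((2*k : ℕ) : ℝ) * M := by
          refine mul_le_mul_of_nonneg_right ?_ hM
          exact_mod_cast (by omega : T - k^2 ≤ 2*k)
      _ = 2*(k:ℝ)*M := by push_cast; ring
  have hST : |S T ω| ≤ |S (k^2) ω| + 2*(k:ℝ)*M := by
    rw [hsplit]
    exact le_trans (abs_add_le _ _) (by linarith)
  have hqk : |q k| = |S (k^2) ω| / (k:ℝ)^2 := by
    rw [hq, abs_div, abs_of_pos hkpos]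
  calc |1/(T:ℝ) * S T ω| = |S T ω| / T := by
        rw [abs_mul, abs_of_nonneg (by positivity : (0:ℝ) ≤ 1/(T:ℝ))]
        ring
    _ ≤ (|S (k^2) ω| + 2*(k:ℝ)*M) / T := by gcongr
    _ ≤ (|S (k^2) ω| + 2*(k:ℝ)*M) / (k:ℝ)^2 := by
        have hnum : (0:ℝ) ≤ |S (k^2) ω| + 2*(k:ℝ)*M := by positivity
        gcongr
    _ = |q k| + 2*M/(k:ℝ) := by
        rw [hqk]
        field_simp

end Dither


open Matrix Filter in
/-- large data regime with quantized observables: for bounded deterministic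
sequences `v_t ∈ ℝᴺ`, `u_t ∈ ℝᵐ` and dither-error sequences `e_t ∈ ℝᴺ`, `d_t ∈ ℝᵐ`
(all scalar components together forming one dither-error family), for every `A, B`,
almost surely
`(1/T) Σ_{t<T} (‖(v_{t+1}+e_{t+1}) − A(v_t+e_t) − B(u_t+d_t)‖² − ‖v_{t+1} − A v_t − B u_t‖²)
  → N ε²/12 + (ε²/12)(‖A‖² + ‖B‖²)`. -/
theorem quantized_observables_large_data_regime
    {Ω : Type*} [MeasureSpace Ω] [IsProbabilityMeasure (ℙ : Measure Ω)]
    (ε : ℝ) (hε : 0 < ε) (N m : ℕ)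
    (v : ℕ → (Fin N → ℝ)) (u : ℕ → (Fin m → ℝ))
    (Cv : ℝ) (hv : ∀ t i, |v t i| ≤ Cv)
    (Cu : ℝ) (hu : ∀ t i, |u t i| ≤ Cu)
    (e : ℕ → Ω → (Fin N → ℝ)) (d : ℕ → Ω → (Fin m → ℝ))
    (hed : IsDitherFamily ε
      (Sum.elim (fun q : ℕ × Fin N => fun ω => e q.1 ω q.2)
                (fun q : ℕ × Fin m => fun ω => d q.1 ω q.2)))
    (A : Matrix (Fin N) (Fin N) ℝ) (B : Matrix (Fin N) (Fin m) ℝ) :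
    ∀ᵐ ω ∂ℙ, Tendsto
      (fun T : ℕ => (1 / (T : ℝ)) * ∑ t ∈ Finset.range T,
        (vecNormSq ((v (t + 1) + e (t + 1) ω) - A *ᵥ (v t + e t ω) - B *ᵥ (u t + d t ω))
          - vecNormSq (v (t + 1) - A *ᵥ v t - B *ᵥ u t)))
      atTop
      (nhds ((N : ℝ) * ε ^ 2 / 12 + ε ^ 2 / 12 * (frobNormSq A + frobNormSq B))) := by
  classical
  set L : ℝ := (N : ℝ) * ε ^ 2 / 12 + ε ^ 2 / 12 * (frobNormSq A + frobNormSq B) with hL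
  set Z : ((ℕ × Fin N) ⊕ (ℕ × Fin m)) → Ω → ℝ :=
    Sum.elim (fun q : ℕ × Fin N => fun ω => e q.1 ω q.2)
             (fun q : ℕ × Fin m => fun ω => d q.1 ω q.2) with hZdef
  have hZ : IsDitherFamily ε Z := hed
  -- index bookkeeping
  set w : ℕ → Fin N → ℝ := fun t => v (t + 1) - A *ᵥ v t - B *ᵥ u t with hwdef
  set ρ : ℕ → Fin N → (Unit ⊕ (Fin N ⊕ Fin m)) → ((ℕ × Fin N) ⊕ (ℕ × Fin m)) :=
    fun t i => Sum.elim (fun _ => Sum.inl (t + 1, i))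
      (Sum.elim (fun j => Sum.inl (t, j)) (fun k => Sum.inr (t, k))) with hρdef
  set co : Fin N → (Unit ⊕ (Fin N ⊕ Fin m)) → ℝ :=
    fun i => Sum.elim (fun _ => 1) (Sum.elim (fun j => -A i j) (fun k => -B i k)) with hcodef
  have hρinj : ∀ t i, Function.Injective (ρ t i) := by
    intro t i a b hab
    rcases a with _ | (j | k) <;> rcases b with _ | (j' | k')
    · rfl
    · simp only [hρdef, Sum.elim_inl, Sum.elim_inr, Sum.inl.injEq, Prod.mk.injEq] at hab
      omega
    · exact absurd hab (by simp [hρdef])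
    · simp only [hρdef, Sum.elim_inl, Sum.elim_inr, Sum.inl.injEq, Prod.mk.injEq] at hab
      omega
    · simp only [hρdef, Sum.elim_inl, Sum.elim_inr, Sum.inl.injEq, Prod.mk.injEq] at hab
      rw [hab.2]
    · exact absurd hab (by simp [hρdef])
    · exact absurd hab (by simp [hρdef])
    · exact absurd hab (by simp [hρdef])
    · simp only [hρdef, Sum.elim_inl, Sum.elim_inr, Sum.inr.injEq, Prod.mk.injEq] at hab
      rw [hab.2]
  set η : ℕ → Fin N → Ω → ℝ := fun t i ω => ∑ a, co i a * Z (ρ t i a) ω with hηdef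
  -- coordinatewise identity
  have hco : ∀ t (ω : Ω) i,
      ((v (t + 1) + e (t + 1) ω) - A *ᵥ (v t + e t ω) - B *ᵥ (u t + d t ω)) i
        = w t i + η t i ω := by
    intro t ω i
    have hZe : ∀ s j, Z (Sum.inl (s, j)) ω = e s ω j := fun s j => rfl
    have hZd : ∀ s k, Z (Sum.inr (s, k)) ω = d s ω k := fun s k => rfl
    simp only [hηdef, hρdef, hcodef, hwdef, Fintype.sum_sum_type, Finset.univ_unique,
      Finset.sum_singleton, Sum.elim_inl, Sum.elim_inr, hZe, hZd, Pi.sub_apply,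
      Pi.add_apply, Matrix.mulVec, dotProduct, one_mul, neg_mul, mul_add,
      Finset.sum_add_distrib, Finset.sum_neg_distrib]
    ring
  -- η facts
  have hηmeas : ∀ t i, Measurable (η t i) :=
    fun t i => Finset.measurable_sum _ fun a _ => ((hZ.1 (ρ t i a)).const_mul _)
  set K : Fin N → ℝ := fun i => (∑ a, |co i a|) * (ε/2) with hK
  have hK0 : ∀ i, 0 ≤ K i := fun i =>
    mul_nonneg (Finset.sum_nonneg fun a _ => abs_nonneg _) (by linarith)
  have hηbd : ∀ t i, ∀ᵐ ω ∂ℙ, |η t i ω| ≤ K i := fun t i =>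
    hZ.linear_ae_bound hε (ρ t i) (co i)
  have hηint : ∀ t i, Integrable (η t i) ℙ := fun t i =>
    integrable_of_ae_bound (hηmeas t i).aestronglyMeasurable (hηbd t i)
  have hηsqint : ∀ t i, Integrable (fun ω => (η t i ω)^2) ℙ := by
    intro t i
    refine integrable_of_ae_bound ((hηmeas t i).pow_const 2).aestronglyMeasurable
      (C := (K i)^2) ?_
    filter_upwards [hηbd t i] with ω h
    have h1 : |(η t i ω)^2| = |η t i ω|^2 := by rw [abs_of_nonneg (sq_nonneg _), sq_abs]
    rw [h1]
    exact pow_le_pow_left₀ (abs_nonneg _) h 2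
  have hηmean : ∀ t i, ∫ ω, η t i ω ∂ℙ = 0 := fun t i => hZ.integral_linear hε (ρ t i) (co i)
  have hηsq : ∀ t i, ∫ ω, (η t i ω)^2 ∂ℙ = (∑ a, (co i a)^2) * (ε^2/12) :=
    fun t i => hZ.integral_linear_sq hε (hρinj t i) (co i)
  have hcoSq : ∀ i, ∑ a, (co i a)^2 = 1 + ((∑ j, (A i j)^2) + (∑ k, (B i k)^2)) := by
    intro i
    simp [hcodef, Fintype.sum_sum_type]
  -- the centered-to-be summand f
  set f : ℕ → Ω → ℝ := fun t ω => ∑ i, (2 * w t i * η t i ω + (η t i ω)^2) with hfdef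
  have hkey : ∀ t (ω : Ω),
      (vecNormSq ((v (t + 1) + e (t + 1) ω) - A *ᵥ (v t + e t ω) - B *ᵥ (u t + d t ω))
        - vecNormSq (v (t + 1) - A *ᵥ v t - B *ᵥ u t)) = f t ω := by
    intro t ω
    rw [hfdef, vecNormSq, vecNormSq, ← Finset.sum_sub_distrib]
    refine Finset.sum_congr rfl fun i _ => ?_
    rw [hco t ω i]
    have hwY : (v (t + 1) - A *ᵥ v t - B *ᵥ u t) i = w t i := rfl
    rw [hwY]
    ring
  have hfmeas : ∀ t, Measurable (f t) := fun t =>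
    Finset.measurable_sum _ fun i _ =>
      (((hηmeas t i).const_mul _).add ((hηmeas t i).pow_const 2))
  have hfint_term : ∀ t (i : Fin N), Integrable (fun ω => 2 * w t i * η t i ω + (η t i ω)^2) ℙ :=
    fun t i => ((hηint t i).const_mul _).add (hηsqint t i)
  have hfmean : ∀ t, ∫ ω, f t ω ∂ℙ = L := by
    intro t
    rw [hfdef]
    rw [integral_finset_sum _ fun i _ => hfint_term t i]
    have hterm : ∀ i : Fin N, ∫ ω, (2 * w t i * η t i ω + (η t i ω)^2) ∂ℙ
        = (1 + ((∑ j, (A i j)^2) + (∑ k, (B i k)^2))) * (ε^2/12) := by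
      intro i
      rw [integral_add ((hηint t i).const_mul _) (hηsqint t i), integral_const_mul,
        hηmean, hηsq, hcoSq, mul_zero, zero_add]
    simp_rw [hterm]
    rw [hL, frobNormSq, frobNormSq, ← Finset.sum_mul, Finset.sum_add_distrib,
      Finset.sum_add_distrib, Finset.sum_const, Finset.card_univ, Fintype.card_fin,
      nsmul_eq_mul, mul_one]
    ring
  -- uniform bounds
  set W : Fin N → ℝ := fun i => Cv + (∑ j, |A i j|) * Cv + (∑ k, |B i k|) * Cu with hW
  have hwbd : ∀ t i, |w t i| ≤ W i := by
    intro t i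
    have h1 : |(A *ᵥ v t) i| ≤ (∑ j, |A i j|) * Cv := by
      calc |(A *ᵥ v t) i| = |∑ j, A i j * v t j| := rfl
        _ ≤ ∑ j, |A i j * v t j| := Finset.abs_sum_le_sum_abs _ _
        _ ≤ ∑ j, |A i j| * Cv := Finset.sum_le_sum fun j _ => by
            rw [abs_mul]; exact mul_le_mul_of_nonneg_left (hv t j) (abs_nonneg _)
        _ = (∑ j, |A i j|) * Cv := (Finset.sum_mul _ _ _).symm
    have h2 : |(B *ᵥ u t) i| ≤ (∑ k, |B i k|) * Cu := by
      calc |(B *ᵥ u t) i| = |∑ k, B i k * u t k| := rfl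
        _ ≤ ∑ k, |B i k * u t k| := Finset.abs_sum_le_sum_abs _ _
        _ ≤ ∑ k, |B i k| * Cu := Finset.sum_le_sum fun k _ => by
            rw [abs_mul]; exact mul_le_mul_of_nonneg_left (hu t k) (abs_nonneg _)
        _ = (∑ k, |B i k|) * Cu := (Finset.sum_mul _ _ _).symm
    have h3 : w t i = v (t+1) i - (A *ᵥ v t) i - (B *ᵥ u t) i := rfl
    rw [h3, hW]
    calc |v (t+1) i - (A *ᵥ v t) i - (B *ᵥ u t) i|
        ≤ |v (t+1) i - (A *ᵥ v t) i| + |(B *ᵥ u t) i| := abs_sub _ _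
      _ ≤ (|v (t+1) i| + |(A *ᵥ v t) i|) + |(B *ᵥ u t) i| :=
          add_le_add_left (abs_sub _ _) _
      _ ≤ Cv + (∑ j, |A i j|) * Cv + (∑ k, |B i k|) * Cu :=
          add_le_add (add_le_add (hv _ i) h1) h2
  have hW0 : ∀ i, 0 ≤ W i := fun i => (abs_nonneg _).trans (hwbd 0 i)
  set M0 : ℝ := ∑ i, (2 * W i * K i + (K i)^2) with hM0
  have hfbd : ∀ t, ∀ᵐ ω ∂ℙ, |f t ω| ≤ M0 := by
    intro t
    filter_upwards [ae_all_iff.2 fun i => hηbd t i] with ω hη'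
    rw [hfdef, hM0]
    calc |∑ i, (2 * w t i * η t i ω + (η t i ω)^2)|
        ≤ ∑ i, |2 * w t i * η t i ω + (η t i ω)^2| := Finset.abs_sum_le_sum_abs _ _
      _ ≤ ∑ i, (2 * W i * K i + (K i)^2) := by
          refine Finset.sum_le_sum fun i _ => ?_
          have h1 : |2 * w t i * η t i ω + (η t i ω)^2|
              ≤ 2 * |w t i| * |η t i ω| + |η t i ω|^2 := by
            calc |2 * w t i * η t i ω + (η t i ω)^2|
                ≤ |2 * w t i * η t i ω| + |(η t i ω)^2| := abs_add_le _ _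
              _ = 2 * |w t i| * |η t i ω| + |η t i ω|^2 := by
                  rw [abs_mul, abs_mul, abs_two, abs_of_nonneg (sq_nonneg (η t i ω)), sq_abs]
          refine le_trans h1 ?_
          nlinarith [hwbd t i, hη' i, abs_nonneg (w t i), abs_nonneg (η t i ω),
            hK0 i, hW0 i]
  have hM00 : 0 ≤ M0 := Finset.sum_nonneg fun i _ => by nlinarith [hK0 i, hW0 i]
  -- centered sequence
  set g : ℕ → Ω → ℝ := fun t ω => f t ω - L with hgdef
  have hfint : ∀ t, Integrable (f t) ℙ := fun t =>
    integrable_of_ae_bound (hfmeas t).aestronglyMeasurable (hfbd t)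
  have hgint : ∀ t, Integrable (g t) ℙ := fun t => (hfint t).sub (integrable_const L)
  have hgmean : ∀ t, ∫ ω, g t ω ∂ℙ = 0 := by
    intro t
    rw [hgdef]
    rw [integral_sub (hfint t) (integrable_const L), integral_const, hfmean t]
    simp
  -- blockwise independence
  set block : ℕ → Finset ((ℕ × Fin N) ⊕ (ℕ × Fin m)) := fun t =>
    ((Finset.univ.image fun p : Fin N => Sum.inl (t, p)) ∪
     (Finset.univ.image fun p : Fin N => Sum.inl (t+1, p))) ∪
     (Finset.univ.image fun p : Fin m => Sum.inr (t, p)) with hblock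
  have hmem : ∀ t i a, ρ t i a ∈ block t := by
    intro t i a
    rcases a with _ | (j | k) <;> simp [hblock, hρdef]
  have hdisj : ∀ s t, s < t → t ≠ s + 1 → Disjoint (block s) (block t) := by
    intro s t h1 h2
    rw [Finset.disjoint_left]
    intro x hx hx'
    simp only [hblock, Finset.mem_union, Finset.mem_image, Finset.mem_univ, true_and]
      at hx hx'
    rcases hx with (⟨p, rfl⟩ | ⟨p, rfl⟩) | ⟨p, rfl⟩ <;>
      rcases hx' with (⟨p', hp⟩ | ⟨p', hp⟩) | ⟨p', hp⟩ <;>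
      simp only [Sum.inl.injEq, Sum.inr.injEq, Prod.mk.injEq, reduceCtorEq] at hp <;> omega
  set Ft : (t : ℕ) → (↥(block t) → ℝ) → ℝ := fun t x =>
    ∑ i, (2 * w t i * (∑ a, co i a * x ⟨ρ t i a, hmem t i a⟩)
      + (∑ a, co i a * x ⟨ρ t i a, hmem t i a⟩)^2) with hFt
  have hFtmeas : ∀ t, Measurable (Ft t) := by
    intro t
    rw [hFt]
    refine Finset.measurable_sum _ fun i _ => ?_
    have hin : Measurable fun x : ↥(block t) → ℝ =>
        ∑ a, co i a * x ⟨ρ t i a, hmem t i a⟩ :=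
      Finset.measurable_sum _ fun a _ => (measurable_pi_apply _).const_mul _
    exact ((hin.const_mul _).add (hin.pow_const 2))
  have hfrep : ∀ t, f t = fun ω => Ft t (fun r => Z r ω) := fun t => rfl
  have hindep : ∀ s t, s < t → t ≠ s+1 → IndepFun (f s) (f t) ℙ := by
    intro s t h1 h2
    rw [hfrep s, hfrep t]
    exact ((hZ.2.1.indepFun_finset (block s) (block t) (hdisj s t h1 h2) hZ.1).comp
      (hFtmeas s) (hFtmeas t))
  have huncorr : ∀ s t, s < t → t ≠ s+1 → ∫ ω, g s ω * g t ω ∂ℙ = 0 := by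
    intro s t h1 h2
    have hsub : Measurable fun x : ℝ => x - L := measurable_id.sub measurable_const
    have hind : IndepFun (g s) (g t) ℙ := (hindep s t h1 h2).comp hsub hsub
    have h := hind.integral_mul_eq_mul_integral (hgint s).aestronglyMeasurable (hgint t).aestronglyMeasurable
    have h2' : ∫ ω, g s ω * g t ω ∂ℙ = ∫ ω, (g s * g t) ω ∂ℙ := rfl
    rw [h2']
    simp only [h]
    rw [hgmean s, zero_mul]
  -- apply the strong law
  have hmain := slln_two_dependent g (M0 + |L|) (add_nonneg hM00 (abs_nonneg L))
    (fun t => (((hfmeas t).sub measurable_const).aestronglyMeasurable))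
    (fun t => by
      filter_upwards [hfbd t] with ω h
      calc |g t ω| = |f t ω - L| := rfl
        _ ≤ |f t ω| + |L| := abs_sub _ _
        _ ≤ M0 + |L| := add_le_add_left h _)
    huncorr
  filter_upwards [hmain] with ω hω
  have htend : Tendsto (fun T : ℕ => (1/(T:ℝ)) * ∑ t ∈ Finset.range T, g t ω + L)
      atTop (nhds (0 + L)) := hω.add_const L
  rw [zero_add] at htend
  refine htend.congr' ?_
  filter_upwards [eventually_ge_atTop 1] with T hT
  have hTne : (T:ℝ) ≠ 0 := Nat.cast_ne_zero.2 (by omega)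
  have hsum : ∑ t ∈ Finset.range T,
      (vecNormSq ((v (t + 1) + e (t + 1) ω) - A *ᵥ (v t + e t ω) - B *ᵥ (u t + d t ω))
        - vecNormSq (v (t + 1) - A *ᵥ v t - B *ᵥ u t))
      = ∑ t ∈ Finset.range T, f t ω := Finset.sum_congr rfl fun t _ => hkey t ω
  have hg : ∑ t ∈ Finset.range T, g t ω
      = (∑ t ∈ Finset.range T, f t ω) - T * L := by
    simp [hgdef, Finset.sum_sub_distrib, Finset.card_range, nsmul_eq_mul]
  show (1/(T:ℝ)) * ∑ t ∈ Finset.range T, g t ω + L = _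
  rw [hg, hsum]
  field_simp
  ring
end
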